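/- Let d, m ≥ 1 and let M : Fin m → Matrix (Fin d) (Fin d) ℂ satisfy Σ_i M_iᴴ M_i ⊑ I in the Loewner order. Let R = Σ_i M_i ⊗ conj(M_i) be the d²×d² matrix representation (Kronecker products with entrywise conjugates). Then: (1) every eigenvalue λ ∈ ℂ of R satisfies |λ| ≤ 1; and (2) for every eigenvalue λ with |λ| = 1, the generalised eigenspace of R for λ equals the eigenspace, i.e. ker((R − λI)²) = ker(R − λI) (equivalently, every Jordan block of R for λ has size 1). -/

import Mathlib

open Matrix
open scoped Kronecker ComplexOrder

/-- The Loewner order: `A ⊑ B` iff `B - A` is positive semidefinite. -/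
def loewner {d : ℕ} (A B : Matrix (Fin d) (Fin d) ℂ) : Prop := (B - A).PosSemidef

/-- The matrix representation `R = Σ_i M_i ⊗ conj(M_i)` of the super-operator with
Kraus family `M`. -/
noncomputable def matRep {d m : ℕ} (M : Fin m → Matrix (Fin d) (Fin d) ℂ) :
    Matrix (Fin d × Fin d) (Fin d × Fin d) ℂ :=
  ∑ i, M i ⊗ₖ (M i).map (starRingEnd ℂ)

noncomputable section KrausAux

def nsq {ι : Type*} [Fintype ι] (v : ι → ℂ) : ℝ := ∑ i, Complex.normSq (v i)

lemma nsq_nonneg {ι : Type*} [Fintype ι] (v : ι → ℂ) : 0 ≤ nsq v :=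
  Finset.sum_nonneg fun _ _ => Complex.normSq_nonneg _

lemma coord_le_nsq {ι : Type*} [Fintype ι] (v : ι → ℂ) (j : ι) :
    Complex.normSq (v j) ≤ nsq v :=
  Finset.single_le_sum (fun _ _ => Complex.normSq_nonneg _) (Finset.mem_univ j)

lemma star_dot_self {ι : Type*} [Fintype ι] (v : ι → ℂ) :
    star v ⬝ᵥ v = (nsq v : ℝ) := by
  simp [dotProduct, nsq, Complex.normSq_eq_conj_mul_self]

-- Cauchy-Schwarz for dotProduct
lemma norm_star_dot_le {ι : Type*} [Fintype ι] (x y : ι → ℂ) :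
    ‖star x ⬝ᵥ y‖ ≤ Real.sqrt (nsq x) * Real.sqrt (nsq y) := by
  calc ‖star x ⬝ᵥ y‖ ≤ ∑ i, ‖x i‖ * ‖y i‖ := by
        refine (norm_sum_le _ _).trans (Finset.sum_le_sum fun i _ => ?_)
        simp [Pi.star_apply, norm_mul]
    _ ≤ Real.sqrt (nsq x) * Real.sqrt (nsq y) := by
        have h := Finset.sum_mul_sq_le_sq_mul_sq Finset.univ (fun i => ‖x i‖) (fun i => ‖y i‖)
        have hx : ∑ i, ‖x i‖ ^ 2 = nsq x := by
          simp [nsq, Complex.normSq_eq_norm_sq]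
        have hy : ∑ i, ‖y i‖ ^ 2 = nsq y := by
          simp [nsq, Complex.normSq_eq_norm_sq]
        rw [hx, hy] at h
        have h0 : (0:ℝ) ≤ ∑ i, ‖x i‖ * ‖y i‖ :=
          Finset.sum_nonneg fun i _ => mul_nonneg (norm_nonneg _) (norm_nonneg _)
        have := Real.sqrt_le_sqrt h
        rwa [Real.sqrt_sq h0, Real.sqrt_mul (nsq_nonneg x)] at this

lemma sum_mulVec' {ι n p : Type*} [Fintype ι] [Fintype p] (A : ι → Matrix n p ℂ) (u : p → ℂ) :
    (∑ i, A i) *ᵥ u = ∑ i, A i *ᵥ u := by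
  ext j
  simp only [Matrix.mulVec, dotProduct, Matrix.sum_apply, Finset.sum_apply,
    Finset.sum_mul]
  rw [Finset.sum_comm]

lemma dot_sum' {ι n : Type*} [Fintype ι] [Fintype n] (v : n → ℂ) (w : ι → n → ℂ) :
    v ⬝ᵥ (∑ i, w i) = ∑ i, v ⬝ᵥ w i := by
  simp only [dotProduct, Finset.sum_apply, Finset.mul_sum]
  rw [Finset.sum_comm]

lemma quad_conjTranspose_mul {d : ℕ} (A : Matrix (Fin d) (Fin d) ℂ) (u : Fin d → ℂ) :
    star u ⬝ᵥ ((Aᴴ * A) *ᵥ u) = (nsq (A *ᵥ u) : ℝ) := by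
  rw [← Matrix.mulVec_mulVec, Matrix.dotProduct_mulVec, ← Matrix.star_mulVec,
    star_dot_self]

variable {d m : ℕ} {M : Fin m → Matrix (Fin d) (Fin d) ℂ}

lemma lemB (hM : loewner (∑ i, (M i)ᴴ * M i) 1) (u : Fin d → ℂ) :
    ∑ i, nsq (M i *ᵥ u) ≤ nsq u := by
  have h := hM.dotProduct_mulVec_nonneg u
  have hc : star u ⬝ᵥ ((1 - ∑ i, (M i)ᴴ * M i) *ᵥ u)
      = ((nsq u - ∑ i, nsq (M i *ᵥ u) : ℝ) : ℂ) := by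
    rw [Matrix.sub_mulVec, dotProduct_sub, Matrix.one_mulVec, star_dot_self]
    rw [sum_mulVec', dot_sum']
    have : ∀ i ∈ Finset.univ, star u ⬝ᵥ ((M i)ᴴ * M i) *ᵥ u = ((nsq (M i *ᵥ u) : ℝ) : ℂ) :=
      fun i _ => quad_conjTranspose_mul (M i) u
    rw [Finset.sum_congr rfl this]
    push_cast
    ring
  rw [hc] at h
  have := (Complex.le_def.mp h).1
  simpa using this

lemma lemA (hM : loewner (∑ i, (M i)ᴴ * M i) 1) (w : Fin m → Fin d → ℂ) :
    nsq (∑ i, (M i)ᴴ *ᵥ w i) ≤ ∑ i, nsq (w i) := by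
  set u := ∑ i, (M i)ᴴ *ᵥ w i with hu
  have key : (nsq u : ℂ) = ∑ i, star (M i *ᵥ u) ⬝ᵥ w i := by
    rw [← star_dot_self]
    nth_rewrite 2 [hu]
    rw [dot_sum']
    refine Finset.sum_congr rfl fun i _ => ?_
    rw [Matrix.dotProduct_mulVec, ← Matrix.star_mulVec]
  have hre : nsq u = ∑ i, (star (M i *ᵥ u) ⬝ᵥ w i).re := by
    have := congrArg Complex.re key
    simpa using this
  have hb : nsq u ≤ Real.sqrt (nsq u) * Real.sqrt (∑ i, nsq (w i)) := by
    calc nsq u = ∑ i, (star (M i *ᵥ u) ⬝ᵥ w i).re := hre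
      _
        ≤ ∑ i, Real.sqrt (nsq (M i *ᵥ u)) * Real.sqrt (nsq (w i)) := by
          refine Finset.sum_le_sum fun i _ => ?_
          exact (Complex.re_le_norm _).trans (norm_star_dot_le _ _)
      _ ≤ Real.sqrt (∑ i, nsq (M i *ᵥ u)) * Real.sqrt (∑ i, nsq (w i)) := by
          have h := Finset.sum_mul_sq_le_sq_mul_sq Finset.univ
            (fun i => Real.sqrt (nsq (M i *ᵥ u))) (fun i => Real.sqrt (nsq (w i)))
          simp only [Real.sq_sqrt (nsq_nonneg _)] at h
          have h0 : (0:ℝ) ≤ ∑ i, Real.sqrt (nsq (M i *ᵥ u)) * Real.sqrt (nsq (w i)) :=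
            Finset.sum_nonneg fun i _ => mul_nonneg (Real.sqrt_nonneg _) (Real.sqrt_nonneg _)
          have := Real.sqrt_le_sqrt h
          rwa [Real.sqrt_sq h0, Real.sqrt_mul (Finset.sum_nonneg fun i _ => nsq_nonneg _)] at this
      _ ≤ Real.sqrt (nsq u) * Real.sqrt (∑ i, nsq (w i)) := by
          have : Real.sqrt (∑ i, nsq (M i *ᵥ u)) ≤ Real.sqrt (nsq u) :=
            Real.sqrt_le_sqrt (lemB hM u)
          exact mul_le_mul_of_nonneg_right this (Real.sqrt_nonneg _)
  have hsq : Real.sqrt (nsq u) ≤ Real.sqrt (∑ i, nsq (w i)) := by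
    rcases eq_or_lt_of_le (Real.sqrt_nonneg (nsq u)) with h0 | h0
    · rw [← h0]; exact Real.sqrt_nonneg _
    · have : Real.sqrt (nsq u) * Real.sqrt (nsq u) ≤ Real.sqrt (nsq u) * Real.sqrt (∑ i, nsq (w i)) := by
        rw [Real.mul_self_sqrt (nsq_nonneg u)]; exact hb
      exact le_of_mul_le_mul_left this h0
  have := mul_self_le_mul_self (Real.sqrt_nonneg (nsq u)) hsq
  rwa [Real.mul_self_sqrt (nsq_nonneg u),
    Real.mul_self_sqrt (Finset.sum_nonneg fun i _ => nsq_nonneg _)] at this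

def Psi (M : Fin m → Matrix (Fin d) (Fin d) ℂ) (Y : Matrix (Fin d) (Fin d) ℂ) :
    Matrix (Fin d) (Fin d) ℂ := ∑ i, (M i)ᴴ * Y * M i

lemma Psi_smul (c : ℂ) (Y : Matrix (Fin d) (Fin d) ℂ) :
    Psi M (c • Y) = c • Psi M Y := by
  simp [Psi, Matrix.mul_smul, Matrix.smul_mul, Finset.smul_sum]

lemma Psi_add (Y Z : Matrix (Fin d) (Fin d) ℂ) :
    Psi M (Y + Z) = Psi M Y + Psi M Z := by
  simp [Psi, Matrix.mul_add, Matrix.add_mul, Finset.sum_add_distrib]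

def frobSq (Y : Matrix (Fin d) (Fin d) ℂ) : ℝ := ∑ a, ∑ b, Complex.normSq (Y a b)

lemma frobSq_nonneg (Y : Matrix (Fin d) (Fin d) ℂ) : 0 ≤ frobSq Y :=
  Finset.sum_nonneg fun _ _ => Finset.sum_nonneg fun _ _ => Complex.normSq_nonneg _

lemma nsq_mulVec_le_frobSq (Y : Matrix (Fin d) (Fin d) ℂ) (u : Fin d → ℂ) :
    nsq (Y *ᵥ u) ≤ frobSq Y * nsq u := by
  rw [nsq, frobSq, Finset.sum_mul]
  refine Finset.sum_le_sum fun a _ => ?_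
  have h1 : ‖(Y *ᵥ u) a‖ ≤ ∑ b, ‖Y a b‖ * ‖u b‖ := by
    have : (Y *ᵥ u) a = ∑ b, Y a b * u b := rfl
    rw [this]
    refine (norm_sum_le _ _).trans (Finset.sum_le_sum fun b _ => ?_)
    simp [norm_mul]
  have h2 : (∑ b, ‖Y a b‖ * ‖u b‖) ^ 2 ≤ (∑ b, ‖Y a b‖ ^ 2) * ∑ b, ‖u b‖ ^ 2 :=
    Finset.sum_mul_sq_le_sq_mul_sq _ _ _
  have h3 : Complex.normSq ((Y *ᵥ u) a) = ‖(Y *ᵥ u) a‖ ^ 2 := by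
    simp [Complex.normSq_eq_norm_sq]
  rw [h3]
  calc ‖(Y *ᵥ u) a‖ ^ 2 ≤ (∑ b, ‖Y a b‖ * ‖u b‖) ^ 2 := by
        have h0 : (0:ℝ) ≤ ∑ b, ‖Y a b‖ * ‖u b‖ :=
          Finset.sum_nonneg fun b _ => mul_nonneg (norm_nonneg _) (norm_nonneg _)
        exact pow_le_pow_left₀ (norm_nonneg _) h1 2
    _ ≤ (∑ b, ‖Y a b‖ ^ 2) * ∑ b, ‖u b‖ ^ 2 := h2
    _ = (∑ b, Complex.normSq (Y a b)) * nsq u := by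
        simp [nsq, Complex.normSq_eq_norm_sq]

lemma Psi_mulVec (Y : Matrix (Fin d) (Fin d) ℂ) (u : Fin d → ℂ) :
    Psi M Y *ᵥ u = ∑ i, (M i)ᴴ *ᵥ (Y *ᵥ (M i *ᵥ u)) := by
  rw [Psi, sum_mulVec']
  refine Finset.sum_congr rfl fun i _ => ?_
  rw [Matrix.mulVec_mulVec, Matrix.mulVec_mulVec]

lemma Psi_contraction (hM : loewner (∑ i, (M i)ᴴ * M i) 1)
    {Y : Matrix (Fin d) (Fin d) ℂ} {c : ℝ} (hc : 0 ≤ c)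
    (hY : ∀ u, nsq (Y *ᵥ u) ≤ c * nsq u) (u : Fin d → ℂ) :
    nsq (Psi M Y *ᵥ u) ≤ c * nsq u := by
  rw [Psi_mulVec]
  calc nsq (∑ i, (M i)ᴴ *ᵥ (Y *ᵥ (M i *ᵥ u)))
      ≤ ∑ i, nsq (Y *ᵥ (M i *ᵥ u)) := lemA hM _
    _ ≤ ∑ i, c * nsq (M i *ᵥ u) := Finset.sum_le_sum fun i _ => hY _
    _ = c * ∑ i, nsq (M i *ᵥ u) := by rw [Finset.mul_sum]
    _ ≤ c * nsq u := mul_le_mul_of_nonneg_left (lemB hM u) hc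

lemma matrix_exists_entry_ne_zero {Y : Matrix (Fin d) (Fin d) ℂ} (hY : Y ≠ 0) :
    ∃ a b, Y a b ≠ 0 := by
  by_contra h
  push_neg at h
  exact hY (Matrix.ext fun a b => h a b)

lemma nsq_single (b : Fin d) : nsq (Pi.single b (1:ℂ)) = 1 := by
  simp [nsq, Pi.single_apply, apply_ite Complex.normSq]

/-- Ψ-side eigenvalue bound. -/
lemma psi_eig_bound (hM : loewner (∑ i, (M i)ᴴ * M i) 1)
    {Y : Matrix (Fin d) (Fin d) ℂ} (hY0 : Y ≠ 0) {mu : ℂ}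
    (hY : Psi M Y = mu • Y) : ‖mu‖ ≤ 1 := by
  by_contra hlt
  push_neg at hlt
  set c := frobSq Y with hc
  have iter : ∀ n u, nsq ((mu ^ n • Y) *ᵥ u) ≤ c * nsq u := by
    intro n
    induction n with
    | zero => intro u; simpa using nsq_mulVec_le_frobSq Y u
    | succ n ih =>
      have hstep : mu ^ (n+1) • Y = Psi M (mu ^ n • Y) := by
        rw [Psi_smul, hY, smul_smul, pow_succ, mul_comm]
      rw [hstep]
      exact Psi_contraction hM (frobSq_nonneg Y) ih
  obtain ⟨a, b, hab⟩ := matrix_exists_entry_ne_zero hY0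
  have hbound : ∀ n : ℕ, Complex.normSq mu ^ n * Complex.normSq (Y a b) ≤ c := by
    intro n
    have h := iter n (Pi.single b 1)
    rw [nsq_single, mul_one] at h
    have hcoord : ((mu ^ n • Y) *ᵥ Pi.single b 1) a = mu ^ n * Y a b := by
      rw [Matrix.smul_mulVec, Matrix.mulVec_single]
      simp
    calc Complex.normSq mu ^ n * Complex.normSq (Y a b)
        = Complex.normSq (((mu ^ n • Y) *ᵥ Pi.single b 1) a) := by
          rw [hcoord, Complex.normSq_mul, map_pow]
      _ ≤ nsq ((mu ^ n • Y) *ᵥ Pi.single b 1) := coord_le_nsq _ a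
      _ ≤ c := h
  have h1 : 1 < Complex.normSq mu := by
    have : Complex.normSq mu = ‖mu‖ ^ 2 := by
      simp [Complex.normSq_eq_norm_sq]
    rw [this]
    nlinarith
  obtain ⟨n, hn⟩ := pow_unbounded_of_one_lt (c / Complex.normSq (Y a b)) h1
  have hpos : 0 < Complex.normSq (Y a b) := Complex.normSq_pos.mpr hab
  have := hbound n
  rw [div_lt_iff₀ hpos] at hn
  linarith

/-- Ψ-side peripheral: generalized eigenvector forces the defect to vanish. -/
lemma psi_peripheral (hM : loewner (∑ i, (M i)ᴴ * M i) 1)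
    {Yv Yw : Matrix (Fin d) (Fin d) ℂ} {mu : ℂ} (hmu : ‖mu‖ = 1)
    (hYv : Psi M Yv = mu • Yv + Yw) (hYw : Psi M Yw = mu • Yw) : Yw = 0 := by
  by_contra hw0
  set c := frobSq Yv with hc
  have iter : ∀ n u, nsq ((mu ^ (n+1) • Yv + ((n+1 : ℕ) * mu ^ n) • Yw) *ᵥ u) ≤ c * nsq u := by
    intro n
    induction n with
    | zero =>
      intro u
      have h0 : mu ^ 1 • Yv + ((0+1 : ℕ) * mu ^ 0) • Yw = Psi M Yv := by
        rw [hYv]; simp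
      rw [h0]
      exact Psi_contraction hM (frobSq_nonneg Yv) (nsq_mulVec_le_frobSq Yv) u
    | succ n ih =>
      have hstep : mu ^ (n+2) • Yv + ((n+2 : ℕ) * mu ^ (n+1)) • Yw
          = Psi M (mu ^ (n+1) • Yv + ((n+1 : ℕ) * mu ^ n) • Yw) := by
        rw [Psi_add, Psi_smul, Psi_smul, hYv, hYw]
        push_cast
        module
      intro u
      have := Psi_contraction hM (frobSq_nonneg Yv) ih u
      rwa [← hstep] at this
  obtain ⟨a, b, hab⟩ := matrix_exists_entry_ne_zero hw0
  have hbound : ∀ n : ℕ, ((n:ℝ)+1) * ‖Yw a b‖ - ‖Yv a b‖ ≤ Real.sqrt c := by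
    intro n
    have h := iter n (Pi.single b 1)
    rw [nsq_single, mul_one] at h
    set z := ((mu ^ (n+1) • Yv + ((n+1 : ℕ) * mu ^ n) • Yw) *ᵥ Pi.single b 1) a with hz
    have hcoord : z = mu ^ (n+1) * Yv a b + ((n+1 : ℕ) * mu ^ n) * Yw a b := by
      rw [hz, Matrix.add_mulVec, Matrix.smul_mulVec, Matrix.smul_mulVec,
        Matrix.mulVec_single, Matrix.mulVec_single]
      simp
    have h1 : Complex.normSq z ≤ c := le_trans (coord_le_nsq _ a) h
    have h2 : ‖z‖ ≤ Real.sqrt c := by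
      have hz2 : ‖z‖ = Real.sqrt (Complex.normSq z) := by
        rw [Complex.norm_def]
      rw [hz2]
      exact Real.sqrt_le_sqrt h1
    have h3 : ((n:ℝ)+1) * ‖Yw a b‖ - ‖Yv a b‖ ≤ ‖z‖ := by
      rw [hcoord]
      have t1 : ‖((n+1 : ℕ) * mu ^ n : ℂ) * Yw a b‖ = ((n:ℝ)+1) * ‖Yw a b‖ := by
        rw [norm_mul, norm_mul, norm_pow, hmu, one_pow, mul_one, Complex.norm_natCast]
        push_cast; ring
      have t2 : ‖(mu ^ (n+1) : ℂ) * Yv a b‖ = ‖Yv a b‖ := by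
        rw [norm_mul, norm_pow, hmu, one_pow, one_mul]
      calc ((n:ℝ)+1) * ‖Yw a b‖ - ‖Yv a b‖
          ≤ ‖((n+1 : ℕ) * mu ^ n : ℂ) * Yw a b‖ - ‖mu ^ (n+1) * Yv a b‖ := by
            rw [t1, t2]
        _ ≤ ‖mu ^ (n+1) * Yv a b + ((n+1 : ℕ) * mu ^ n : ℂ) * Yw a b‖ := by
            have := norm_add_le (mu ^ (n+1) * Yv a b + ((n+1 : ℕ) * mu ^ n : ℂ) * Yw a b)
              (-(mu ^ (n+1) * Yv a b))
            simp only [norm_neg] at this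
            have heq : mu ^ (n+1) * Yv a b + ((n+1 : ℕ) * mu ^ n : ℂ) * Yw a b
                + -(mu ^ (n+1) * Yv a b) = ((n+1 : ℕ) * mu ^ n : ℂ) * Yw a b := by ring
            rw [heq] at this
            linarith
    linarith
  have hYwab : 0 < ‖Yw a b‖ := norm_pos_iff.mpr hab
  obtain ⟨n, hn⟩ := exists_nat_gt ((Real.sqrt c + ‖Yv a b‖) / ‖Yw a b‖)
  have := hbound n
  rw [div_lt_iff₀ hYwab] at hn
  nlinarith [Nat.cast_nonneg (α := ℝ) n]


lemma conjT_matRep_apply {d m : ℕ} (M : Fin m → Matrix (Fin d) (Fin d) ℂ)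
    (v : Fin d × Fin d → ℂ) (a b : Fin d) :
    ((matRep M)ᴴ *ᵥ v) (a, b) = Psi M (Matrix.of fun a b => v (a, b)) a b := by
  simp only [Matrix.mulVec, dotProduct, Matrix.conjTranspose_apply, matRep, Psi,
    Matrix.sum_apply, Matrix.mul_apply, Matrix.kroneckerMap_apply, Matrix.map_apply,
    Fintype.sum_prod_type, star_sum, star_mul', Matrix.of_apply,
    Finset.sum_mul, Finset.mul_sum, RingHom.coe_coe, starRingEnd_apply, star_star]
  conv_rhs => rw [Finset.sum_comm]
  conv_rhs => enter [2, e]; rw [Finset.sum_comm]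
  conv_rhs => rw [Finset.sum_comm]
  refine Finset.sum_congr rfl fun c _ => Finset.sum_congr rfl fun e _ =>
    Finset.sum_congr rfl fun i _ => by ring

end KrausAux

/-- Jordan structure of the matrix representation of a trace-nonincreasing
super-operator: all eigenvalues have modulus at most `1`, and eigenvalues of
modulus `1` have one-dimensional Jordan blocks (their generalised eigenspace
equals their eigenspace). -/
theorem matRep_eigenvalue_bound_and_peripheral_diagonalisable
    (d m : ℕ) (hd : 1 ≤ d) (hm : 1 ≤ m)
    (M : Fin m → Matrix (Fin d) (Fin d) ℂ)
    (hM : loewner (∑ i, (M i)ᴴ * M i) 1) :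
    (∀ lam : ℂ,
      (∃ v : Fin d × Fin d → ℂ, v ≠ 0 ∧ matRep M *ᵥ v = lam • v) → ‖lam‖ ≤ 1) ∧
    (∀ lam : ℂ, ‖lam‖ = 1 →
      {v : Fin d × Fin d → ℂ |
          ((matRep M - lam • 1) * (matRep M - lam • 1)) *ᵥ v = 0}
        = {v : Fin d × Fin d → ℂ | (matRep M - lam • 1) *ᵥ v = 0}) := by
  classical
  -- translation of eigen-equations for `(matRep M)ᴴ` to the map `Psi M`
  have key : ∀ (w : Fin d × Fin d → ℂ) (z : Fin d × Fin d → ℂ),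
      (matRep M)ᴴ *ᵥ w = z →
      Psi M (Matrix.of fun a b => w (a, b)) = Matrix.of fun a b => z (a, b) := by
    intro w z hw
    ext a b
    have h := congrFun hw (a, b)
    rw [conjT_matRep_apply] at h
    simpa using h
  have hBeq : ∀ lam : ℂ, (matRep M - lam • 1)ᴴ = (matRep M)ᴴ - star lam • 1 := by
    intro lam
    rw [Matrix.conjTranspose_sub, Matrix.conjTranspose_smul, Matrix.conjTranspose_one]
  constructor
  · rintro lam ⟨v, hv0, hv⟩
    have h1 : (matRep M - lam • 1) *ᵥ v = 0 := by
      rw [Matrix.sub_mulVec, hv, Matrix.smul_mulVec, Matrix.one_mulVec, sub_self]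
    have hdet : (matRep M - lam • 1).det = 0 :=
      Matrix.exists_mulVec_eq_zero_iff.mp ⟨v, hv0, h1⟩
    have hdet2 : ((matRep M)ᴴ - star lam • 1).det = 0 := by
      rw [← hBeq, Matrix.det_conjTranspose, hdet, star_zero]
    obtain ⟨w, hw0, hw⟩ := Matrix.exists_mulVec_eq_zero_iff.mpr hdet2
    have hw' : (matRep M)ᴴ *ᵥ w = star lam • w := by
      rw [Matrix.sub_mulVec, sub_eq_zero, Matrix.smul_mulVec, Matrix.one_mulVec] at hw
      exact hw
    have hPsi := key w (star lam • w) hw'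
    have hY0 : (Matrix.of fun a b => w (a, b)) ≠ 0 := by
      intro h
      apply hw0
      funext p
      have := congrFun (congrFun h p.1) p.2
      simpa using this
    have hPsi' : Psi M (Matrix.of fun a b => w (a, b))
        = star lam • (Matrix.of fun a b => w (a, b)) := by
      rw [hPsi]; ext a b; simp
    have := psi_eig_bound hM hY0 hPsi'
    rwa [norm_star] at this
  · intro lam hlam
    set A := matRep M - lam • 1 with hA
    set B := Aᴴ with hB
    have hBeq' : B = (matRep M)ᴴ - star lam • 1 := hBeq lam
    have hBker : ∀ v, (B * B) *ᵥ v = 0 → B *ᵥ v = 0 := by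
      intro v hv
      set w := B *ᵥ v with hwdef
      have hw : B *ᵥ w = 0 := by rw [hwdef, Matrix.mulVec_mulVec, hv]
      have hw1 : (matRep M)ᴴ *ᵥ w = star lam • w := by
        rw [hBeq', Matrix.sub_mulVec, sub_eq_zero, Matrix.smul_mulVec,
          Matrix.one_mulVec] at hw
        exact hw
      have hv1 : (matRep M)ᴴ *ᵥ v = star lam • v + w := by
        rw [hwdef, hBeq', Matrix.sub_mulVec, Matrix.smul_mulVec, Matrix.one_mulVec]
        ring_nf
      have hPsiw : Psi M (Matrix.of fun a b => w (a, b))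
          = star lam • (Matrix.of fun a b => w (a, b)) := by
        rw [key w (star lam • w) hw1]; ext a b; simp
      have hPsiv : Psi M (Matrix.of fun a b => v (a, b))
          = star lam • (Matrix.of fun a b => v (a, b)) + (Matrix.of fun a b => w (a, b)) := by
        rw [key v (star lam • v + w) hv1]; ext a b; simp
      have hmu : ‖star lam‖ = 1 := by rwa [norm_star]
      have hzero := psi_peripheral hM hmu hPsiv hPsiw
      funext p
      have := congrFun (congrFun hzero p.1) p.2
      simpa using this
    have hkerB : LinearMap.ker (B * B).mulVecLin = LinearMap.ker B.mulVecLin := by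
      apply le_antisymm
      · intro v hv
        rw [LinearMap.mem_ker, Matrix.mulVecLin_apply] at hv ⊢
        exact hBker v hv
      · intro v hv
        rw [LinearMap.mem_ker, Matrix.mulVecLin_apply] at hv ⊢
        rw [← Matrix.mulVec_mulVec, hv, Matrix.mulVec_zero]
    have h1 := LinearMap.finrank_range_add_finrank_ker (B * B).mulVecLin
    have h2 := LinearMap.finrank_range_add_finrank_ker B.mulVecLin
    rw [hkerB] at h1
    have hrank : (B * B).rank = B.rank := by
      rw [Matrix.rank, Matrix.rank]
      omega
    have hrankA : (A * A).rank = A.rank := by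
      have e1 : (A * A)ᴴ = B * B := by rw [Matrix.conjTranspose_mul, hB]
      calc (A * A).rank = (A * A)ᴴ.rank := (Matrix.rank_conjTranspose _).symm
        _ = (B * B).rank := by rw [e1]
        _ = B.rank := hrank
        _ = A.rank := by rw [hB, Matrix.rank_conjTranspose]
    have h3 := LinearMap.finrank_range_add_finrank_ker (A * A).mulVecLin
    have h4 := LinearMap.finrank_range_add_finrank_ker A.mulVecLin
    have hkfin : Module.finrank ℂ (LinearMap.ker (A * A).mulVecLin)
        ≤ Module.finrank ℂ (LinearMap.ker A.mulVecLin) := by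
      have ha : (A * A).rank = Module.finrank ℂ (LinearMap.range (A * A).mulVecLin) := rfl
      have hb : A.rank = Module.finrank ℂ (LinearMap.range A.mulVecLin) := rfl
      omega
    have hle : LinearMap.ker A.mulVecLin ≤ LinearMap.ker (A * A).mulVecLin := by
      intro v hv
      rw [LinearMap.mem_ker, Matrix.mulVecLin_apply] at hv ⊢
      rw [← Matrix.mulVec_mulVec, hv, Matrix.mulVec_zero]
    have heq : LinearMap.ker A.mulVecLin = LinearMap.ker (A * A).mulVecLin :=
      Submodule.eq_of_le_of_finrank_le hle hkfin
    ext v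
    simp only [Set.mem_setOf_eq]
    constructor
    · intro hv
      have : v ∈ LinearMap.ker (A * A).mulVecLin := by
        rw [LinearMap.mem_ker, Matrix.mulVecLin_apply]; exact hv
      rw [← heq] at this
      rw [LinearMap.mem_ker, Matrix.mulVecLin_apply] at this
      exact this
    · intro hv
      rw [← Matrix.mulVec_mulVec, hv, Matrix.mulVec_zero]
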